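/- Let 1 ≤ p < ∞ and equip ℓ^p = ℓ^p(ℕ, ℂ) with the contractive c₀-module structure given by coordinatewise multiplication. Then ℓ^p is extremely injective with respect to the class of all homogeneous contractive normed c₀-modules: for all homogeneous contractive normed c₀-modules X, Y, every isometric morphism i : X → Y and every morphism φ : X → ℓ^p, there exists a morphism ψ : Y → ℓ^p with ψ ∘ i = φ and ‖ψ‖ = ‖φ‖. -/

import Mathlib

open Filter MeasureTheory

noncomputable section

/-- The algebra `c₀` of complex sequences converging to zero, with pointwise
operations and the supremum norm. -/
abbrev czero : Type := ZeroAtInftyContinuousMap ℕ ℂ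

/-- The `n`-th ort: the indicator sequence of `{n}`. -/
def ort (n : ℕ) : czero where
  toFun := fun m => if m = n then 1 else 0
  continuous_toFun := continuous_of_discreteTopology
  zero_at_infty' := by
    rw [cocompact_eq_atTop]
    have h : (fun m : ℕ => if m = n then (1 : ℂ) else 0) =ᶠ[atTop] fun _ => (0 : ℂ) := by
      filter_upwards [eventually_gt_atTop n] with m hm
      simp [Nat.ne_of_gt hm]
    exact (tendsto_congr' h).mpr tendsto_const_nhds

/-- `P N = p⁰ + ⋯ + p^{N-1}`. -/
def PN (N : ℕ) : czero := ∑ n ∈ Finset.range N, ort n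

/-- A (contractive) normed `c₀`-module structure on a complex normed space `X`. -/
structure C0Mod (X : Type) [NormedAddCommGroup X] [NormedSpace ℂ X] where
  smul : czero → X → X
  add_smul : ∀ a b x, smul (a + b) x = smul a x + smul b x
  smul_add : ∀ a x y, smul a (x + y) = smul a x + smul a y
  mul_smul : ∀ a b x, smul (a * b) x = smul a (smul b x)
  csmul_left : ∀ (c : ℂ) a x, smul (c • a) x = c • smul a x
  csmul_right : ∀ (c : ℂ) a x, smul a (c • x) = c • smul a x
  norm_smul_le : ∀ a x, ‖smul a x‖ ≤ ‖a‖ * ‖x‖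

namespace C0Mod

variable {X : Type} [NormedAddCommGroup X] [NormedSpace ℂ X] (M : C0Mod X)

/-- The action of `a ∈ c₀` as a continuous linear map. -/
def lsmul (a : czero) : X →L[ℂ] X :=
  LinearMap.mkContinuous
    { toFun := M.smul a
      map_add' := M.smul_add a
      map_smul' := fun c x => M.csmul_right c a x }
    ‖a‖ (fun x => M.norm_smul_le a x)

@[simp] lemma lsmul_apply (a : czero) (x : X) : M.lsmul a x = M.smul a x := rfl

/-- The essential part `X_es` of `X`: the closure of the linear span of all
products `a • x`. -/
def essSet : Set X :=
  closure (Submodule.span ℂ {y : X | ∃ (a : czero) (x : X), y = M.smul a x} : Set X)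

/-- A module is essential if it coincides with its essential part. -/
def Essential : Prop := M.essSet = Set.univ

/-- The `n`-th coordinate submodule `Xₙ = {pⁿ • x : x ∈ X}`. -/
def coordSub (n : ℕ) : Submodule ℂ X := LinearMap.range ((M.lsmul (ort n)) : X →ₗ[ℂ] X)

lemma mem_coordSub (n : ℕ) (x : X) : M.smul (ort n) x ∈ M.coordSub n := ⟨x, rfl⟩

/-- A module is homogeneous if the norm of an element is determined by the norms
of its coordinates. -/
def Homogeneous : Prop :=
  ∀ x y : X, (∀ n : ℕ, ‖M.smul (ort n) x‖ = ‖M.smul (ort n) y‖) → ‖x‖ = ‖y‖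

/-- The annihilator of `c₀` in `X`. -/
def ann : Submodule ℂ X where
  carrier := {x : X | ∀ a : czero, M.smul a x = 0}
  add_mem' := by
    intro x y hx hy
    intro a
    rw [M.smul_add, hx a, hy a, add_zero]
  zero_mem' := by
    intro a
    have h := M.smul_add a 0 0
    simp only [add_zero] at h
    have := congrArg (fun z => z - M.smul a 0) h
    simpa using this.symm
  smul_mem' := by
    intro c x hx a
    rw [M.csmul_right, hx a, smul_zero]

end C0Mod
open scoped ENNReal

lemma czero_apply_norm_le (a : czero) (n : ℕ) : ‖a n‖ ≤ ‖a‖ := by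
  rw [← ZeroAtInftyContinuousMap.norm_toBCF_eq_norm]
  exact a.toBCF.norm_coe_le_norm n

lemma memℓp_czero_mul {p : ℝ≥0∞} (hp : 1 ≤ p) (a : czero) (f : ℕ → ℂ)
    (hf : Memℓp f p) : Memℓp (fun n => a n * f n) p := by
  rcases p.trichotomy with rfl | rfl | hpt
  · exact absurd hp (by simp)
  · obtain ⟨C, hC⟩ := hf.bddAbove
    apply memℓp_infty
    refine ⟨‖a‖ * C, ?_⟩
    rintro r ⟨n, rfl⟩
    calc ‖a n * f n‖ = ‖a n‖ * ‖f n‖ := norm_mul _ _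
      _ ≤ ‖a‖ * C := by
          have h1 := czero_apply_norm_le a n
          have h2 : ‖f n‖ ≤ C := hC (Set.mem_range_self n)
          exact mul_le_mul h1 h2 (norm_nonneg _) (norm_nonneg _)
  · apply memℓp_gen
    have hsum : Summable (fun n => ‖a‖ ^ p.toReal * ‖f n‖ ^ p.toReal) :=
      (hf.summable hpt).mul_left _
    refine hsum.of_nonneg_of_le
      (fun n => Real.rpow_nonneg (norm_nonneg _) _) (fun n => ?_)
    calc ‖a n * f n‖ ^ p.toReal ≤ (‖a‖ * ‖f n‖) ^ p.toReal := by
          apply Real.rpow_le_rpow (norm_nonneg _) _ hpt.le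
          rw [norm_mul]
          exact mul_le_mul_of_nonneg_right (czero_apply_norm_le a n) (norm_nonneg _)
      _ = ‖a‖ ^ p.toReal * ‖f n‖ ^ p.toReal :=
          Real.mul_rpow (norm_nonneg _) (norm_nonneg _)

/-- The contractive normed `c₀`-module `ℓ^p(ℕ, ℂ)` (`1 ≤ p ≤ ∞`), with the
coordinatewise action of `c₀`. -/
def lpC0Mod (p : ℝ≥0∞) [hp : Fact (1 ≤ p)] : C0Mod (lp (fun _ : ℕ => ℂ) p) where
  smul a x := ⟨fun n => a n * x n, memℓp_czero_mul hp.out a x (lp.memℓp x)⟩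
  add_smul a b x := by
    apply lp.ext
    rw [lp.coeFn_add]
    funext n
    show ((a + b) n) * x n = a n * x n + b n * x n
    rw [ZeroAtInftyContinuousMap.coe_add, Pi.add_apply, add_mul]
  smul_add a x y := by
    apply lp.ext
    simp only [lp.coeFn_add]
    funext n
    show a n * ((x + y : lp _ p) n) = a n * x n + a n * y n
    rw [lp.coeFn_add, Pi.add_apply, mul_add]
  mul_smul a b x := by
    apply lp.ext
    funext n
    show ((a * b) n) * x n = a n * (b n * x n)
    rw [ZeroAtInftyContinuousMap.coe_mul, Pi.mul_apply, mul_assoc]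
  csmul_left c a x := by
    apply lp.ext
    rw [lp.coeFn_smul]
    funext n
    show ((c • a) n) * x n = c • (a n * x n)
    rw [ZeroAtInftyContinuousMap.coe_smul, Pi.smul_apply, smul_eq_mul, smul_eq_mul, mul_assoc]
  csmul_right c a x := by
    apply lp.ext
    simp only [lp.coeFn_smul]
    funext n
    show a n * ((c • x : lp _ p) n) = c • (a n * x n)
    rw [lp.coeFn_smul, Pi.smul_apply, smul_eq_mul, smul_eq_mul]
    ring
  norm_smul_le a x := by
    rcases p.trichotomy with rfl | rfl | hpt
    · exact absurd hp.out (by simp)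
    · apply lp.norm_le_of_forall_le (mul_nonneg (norm_nonneg a) (norm_nonneg x))
      intro n
      show ‖a n * x n‖ ≤ ‖a‖ * ‖x‖
      rw [norm_mul]
      exact mul_le_mul (czero_apply_norm_le a n)
        (lp.norm_apply_le_norm ENNReal.top_ne_zero x n) (norm_nonneg _) (norm_nonneg _)
    · apply lp.norm_le_of_tsum_le hpt (mul_nonneg (norm_nonneg a) (norm_nonneg x))
      have hx : Summable (fun n => ‖x n‖ ^ p.toReal) := (lp.memℓp x).summable hpt
      have hax : Summable (fun n => ‖a n * x n‖ ^ p.toReal) :=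
        (memℓp_czero_mul hp.out a x (lp.memℓp x)).summable hpt
      have hle : ∀ n : ℕ, ‖a n * x n‖ ^ p.toReal ≤ ‖a‖ ^ p.toReal * ‖x n‖ ^ p.toReal := by
        intro n
        calc ‖a n * x n‖ ^ p.toReal ≤ (‖a‖ * ‖x n‖) ^ p.toReal := by
              apply Real.rpow_le_rpow (norm_nonneg _) _ hpt.le
              rw [norm_mul]
              exact mul_le_mul_of_nonneg_right (czero_apply_norm_le a n) (norm_nonneg _)
          _ = ‖a‖ ^ p.toReal * ‖x n‖ ^ p.toReal :=
              Real.mul_rpow (norm_nonneg _) (norm_nonneg _)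
      calc (∑' n : ℕ, ‖a n * x n‖ ^ p.toReal)
          ≤ ∑' n : ℕ, ‖a‖ ^ p.toReal * ‖x n‖ ^ p.toReal :=
            Summable.tsum_le_tsum hle hax (hx.mul_left _)
        _ = ‖a‖ ^ p.toReal * ∑' n : ℕ, ‖x n‖ ^ p.toReal := tsum_mul_left
        _ = ‖a‖ ^ p.toReal * ‖x‖ ^ p.toReal := by rw [← lp.norm_rpow_eq_tsum hpt]
        _ = (‖a‖ * ‖x‖) ^ p.toReal := (Real.mul_rpow (norm_nonneg _) (norm_nonneg _)).symm
lemma ort_apply (n m : ℕ) : ort n m = if m = n then 1 else 0 := rfl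

lemma ort_mul_ort (m n : ℕ) : ort m * ort n = if m = n then ort m else 0 := by
  ext k
  rw [ZeroAtInftyContinuousMap.coe_mul, Pi.mul_apply]
  by_cases h : m = n
  · subst h
    rw [if_pos rfl, ort_apply]
    show ((if k = m then (1:ℂ) else 0) * if k = m then 1 else 0) = _
    by_cases hk : k = m <;> simp [hk]
  · rw [if_neg h, ZeroAtInftyContinuousMap.coe_zero, Pi.zero_apply]
    show ((if k = m then (1:ℂ) else 0) * if k = n then 1 else 0) = 0
    by_cases hk : k = m
    · subst hk
      have hn : ¬ (k = n) := fun e => h e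
      rw [if_neg hn, mul_zero]
    · rw [if_neg hk, zero_mul]

lemma czero_sum_apply (s : Finset ℕ) (f : ℕ → czero) (m : ℕ) :
    (∑ n ∈ s, f n) m = ∑ n ∈ s, f n m := by
  classical
  induction s using Finset.induction with
  | empty => simp [ZeroAtInftyContinuousMap.coe_zero]
  | insert _ _ h ih =>
    rw [Finset.sum_insert h, Finset.sum_insert h, ZeroAtInftyContinuousMap.coe_add,
      Pi.add_apply, ih]

lemma ort_mul_sum (m : ℕ) (s : Finset ℕ) :
    ort m * (∑ n ∈ s, ort n) = if m ∈ s then ort m else 0 := by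
  rw [Finset.mul_sum]
  by_cases h : m ∈ s
  · rw [if_pos h, Finset.sum_eq_single_of_mem m h]
    · rw [ort_mul_ort, if_pos rfl]
    · intro n hn hnm
      rw [ort_mul_ort, if_neg (fun e => hnm e.symm)]
  · rw [if_neg h]
    apply Finset.sum_eq_zero
    intro n hn
    rw [ort_mul_ort, if_neg (fun e => h (by rwa [e]))]

lemma norm_ort_sum_le (s : Finset ℕ) : ‖(∑ n ∈ s, ort n : czero)‖ ≤ 1 := by
  rw [← ZeroAtInftyContinuousMap.norm_toBCF_eq_norm]
  rw [BoundedContinuousFunction.norm_le zero_le_one]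
  intro m
  show ‖(∑ n ∈ s, ort n : czero) m‖ ≤ 1
  rw [czero_sum_apply]
  by_cases h : m ∈ s
  · rw [Finset.sum_eq_single_of_mem m h]
    · rw [ort_apply, if_pos rfl]; norm_num
    · intro n hn hnm
      have hmn : ¬ (m = n) := fun e => hnm e.symm
      rw [ort_apply, if_neg hmn]
  · rw [Finset.sum_eq_zero]
    · norm_num
    · intro n hn
      have hmn : ¬ (m = n) := fun e => h (by rwa [e])
      rw [ort_apply, if_neg hmn]

lemma ort_mul_czero (n : ℕ) (a : czero) : ort n * a = a n • ort n := by
  ext m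
  rw [ZeroAtInftyContinuousMap.coe_mul, Pi.mul_apply, ZeroAtInftyContinuousMap.coe_smul,
    Pi.smul_apply, smul_eq_mul]
  show (if m = n then (1:ℂ) else 0) * a m = a n * (if m = n then 1 else 0)
  by_cases h : m = n
  · subst h; simp
  · simp [h]

lemma C0Mod.smul_zero_left {X : Type} [NormedAddCommGroup X] [NormedSpace ℂ X]
    (M : C0Mod X) (x : X) : M.smul 0 x = 0 := by
  have h := M.csmul_left 0 0 x
  rw [zero_smul, zero_smul] at h
  exact h

lemma norm_ort_le (n : ℕ) : ‖ort n‖ ≤ 1 := by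
  have h := norm_ort_sum_le {n}
  rwa [Finset.sum_singleton] at h


/-- For `1 ≤ p < ∞`, the `c₀`-module `ℓ^p = ℓ^p(ℕ, ℂ)` (with
the coordinatewise action) is extremely injective with respect to the class of
all homogeneous contractive normed `c₀`-modules. -/
theorem lp_extremely_injective (p : ℝ≥0∞) [Fact (1 ≤ p)] (hptop : p ≠ ∞) :
    ∀ (X Y : Type) [NormedAddCommGroup X] [NormedSpace ℂ X]
      [NormedAddCommGroup Y] [NormedSpace ℂ Y]
      (Mx : C0Mod X) (My : C0Mod Y),
      Mx.Homogeneous → My.Homogeneous →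
      ∀ (i : X →L[ℂ] Y),
        (∀ (a : czero) (x : X), i (Mx.smul a x) = My.smul a (i x)) →
        (∀ x : X, ‖i x‖ = ‖x‖) →
        ∀ (φ : X →L[ℂ] lp (fun _ : ℕ => ℂ) p),
          (∀ (a : czero) (x : X), φ (Mx.smul a x) = (lpC0Mod p).smul a (φ x)) →
          ∃ ψ : Y →L[ℂ] lp (fun _ : ℕ => ℂ) p,
            (∀ (a : czero) (y : Y), ψ (My.smul a y) = (lpC0Mod p).smul a (ψ y)) ∧
            (∀ x : X, ψ (i x) = φ x) ∧ ‖ψ‖ = ‖φ‖ := by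
  intro X Y _ _ _ _ Mx My hX hY i himod hiiso φ hφmod
  classical
  have hp1 : (1 : ℝ≥0∞) ≤ p := Fact.out
  have hp0 : p ≠ 0 := fun h => by simp [h] at hp1
  have hpt : 0 < p.toReal := ENNReal.toReal_pos hp0 hptop
  -- coordinate functionals on ℓ^p
  let coord : ℕ → (lp (fun _ : ℕ => ℂ) p →L[ℂ] ℂ) := fun n =>
    LinearMap.mkContinuous
      { toFun := fun f => f n
        map_add' := fun f g => by simp [lp.coeFn_add]
        map_smul' := fun c f => by simp [lp.coeFn_smul] }
      1 (fun f => by rw [one_mul]; exact lp.norm_apply_le_norm hp0 f n)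
  let φn : ℕ → (X →L[ℂ] ℂ) := fun n => (coord n).comp φ
  have hphin : ∀ (n : ℕ) (x : X), φn n (Mx.smul (ort n) x) = φn n x := by
    intro n x
    show (φ (Mx.smul (ort n) x)) n = (φ x) n
    rw [hφmod]
    show ort n n * (φ x) n = (φ x) n
    rw [ort_apply, if_pos rfl, one_mul]
  -- the isometric image of X in Y
  have hinj : Function.Injective i := by
    intro a b h
    have h0 : ‖a - b‖ = 0 := by rw [← hiiso, map_sub, h, sub_self, norm_zero]
    have := norm_eq_zero.mp h0
    rwa [sub_eq_zero] at this
  have hinjL : Function.Injective (i : X →ₗ[ℂ] Y) := hinj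
  set S : Submodule ℂ Y := LinearMap.range (i : X →ₗ[ℂ] Y) with hSdef
  let e := LinearEquiv.ofInjective (i : X →ₗ[ℂ] Y) hinjL
  have he : ∀ x : X, ((e x : S) : Y) = i x := fun x => LinearEquiv.ofInjective_apply _ _
  have hesymm_norm : ∀ z : S, ‖e.symm z‖ = ‖(z : Y)‖ := by
    intro z
    rw [← hiiso (e.symm z), ← he (e.symm z), e.apply_symm_apply]
  let F : ℕ → (S →L[ℂ] ℂ) := fun n =>
    LinearMap.mkContinuous ((φn n).toLinearMap.comp (e.symm.toLinearMap)) ‖φn n‖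
      (fun z => by
        calc ‖φn n (e.symm z)‖ ≤ ‖φn n‖ * ‖e.symm z‖ := (φn n).le_opNorm _
          _ = ‖φn n‖ * ‖z‖ := by rw [hesymm_norm]; rfl)
  have hFle : ∀ n, ‖F n‖ ≤ ‖φn n‖ :=
    fun n => LinearMap.mkContinuous_norm_le _ (norm_nonneg _) _
  choose g hg hgnorm using fun n => exists_extension_norm_eq S (F n)
  have hgi : ∀ (n : ℕ) (x : X), g n (i x) = φn n x := by
    intro n x
    have hmem : i x ∈ S := ⟨x, rfl⟩
    have hex : e x = ⟨i x, hmem⟩ := Subtype.ext (he x)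
    have h2 : e.symm ⟨i x, hmem⟩ = x := by rw [← hex, e.symm_apply_apply]
    calc g n (i x) = F n ⟨i x, hmem⟩ := hg n ⟨i x, hmem⟩
      _ = φn n x := by show φn n (e.symm ⟨i x, hmem⟩) = φn n x; rw [h2]
  have hgb : ∀ (n : ℕ) (z : Y), ‖g n z‖ ≤ ‖φn n‖ * ‖z‖ := by
    intro n z
    calc ‖g n z‖ ≤ ‖g n‖ * ‖z‖ := (g n).le_opNorm z
      _ ≤ ‖φn n‖ * ‖z‖ := by
          apply mul_le_mul_of_nonneg_right _ (norm_nonneg z)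
          rw [hgnorm n]; exact hFle n
  -- the key estimate
  have key : ∀ (y : Y) (s : Finset ℕ),
      ∑ n ∈ s, ‖g n (My.smul (ort n) y)‖ ^ p.toReal ≤ (‖φ‖ * ‖y‖) ^ p.toReal := by
    intro y s
    set s' : Finset ℕ := s.filter (fun n => g n (My.smul (ort n) y) ≠ 0) with hs'
    have hsum_eq : ∑ n ∈ s, ‖g n (My.smul (ort n) y)‖ ^ p.toReal
        = ∑ n ∈ s', ‖g n (My.smul (ort n) y)‖ ^ p.toReal := by
      refine (Finset.sum_subset (Finset.filter_subset _ _) ?_).symm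
      intro n hn hn'
      have hbn : g n (My.smul (ort n) y) = 0 := by
        by_contra hne
        exact hn' (Finset.mem_filter.mpr ⟨hn, hne⟩)
      rw [hbn, norm_zero, Real.zero_rpow hpt.ne']
    rw [hsum_eq]
    have main : ∀ k : ℕ, (1 - 1/(k+1) : ℝ) ^ p.toReal *
        ∑ n ∈ s', ‖g n (My.smul (ort n) y)‖ ^ p.toReal ≤ (‖φ‖ * ‖y‖) ^ p.toReal := by
      intro k
      have ht0 : (0:ℝ) ≤ 1 - 1/(k+1) := by
        rw [sub_nonneg, div_le_one (by positivity)]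
        have : (0:ℝ) ≤ (k:ℝ) := Nat.cast_nonneg k
        linarith
      have ht1 : (1 - 1/(k+1) : ℝ) < 1 := by
        have : (0:ℝ) < 1/((k:ℝ)+1) := by positivity
        linarith
      -- choose near-maximizers
      have hex : ∀ n : ℕ, ∃ x : X, (n ∉ s' → x = 0) ∧
          (n ∈ s' → Mx.smul (ort n) x = x ∧ ‖x‖ = ‖My.smul (ort n) y‖ ∧
            (1 - 1/(k+1) : ℝ) * ‖g n (My.smul (ort n) y)‖ ≤ ‖φn n x‖) := by
        intro n
        by_cases hn : n ∈ s'
        · have hbpos : 0 < ‖g n (My.smul (ort n) y)‖ :=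
            norm_pos_iff.mpr (Finset.mem_filter.mp hn).2
          have hble : ‖g n (My.smul (ort n) y)‖ ≤ ‖φn n‖ * ‖My.smul (ort n) y‖ := hgb n _
          have hrpos : 0 < ‖My.smul (ort n) y‖ := by
            by_contra hc
            push_neg at hc
            have h0 : ‖My.smul (ort n) y‖ = 0 := le_antisymm hc (norm_nonneg _)
            rw [h0, mul_zero] at hble
            linarith
          have htb : (1 - 1/(k+1) : ℝ) * ‖g n (My.smul (ort n) y)‖
              < ‖φn n‖ * ‖My.smul (ort n) y‖ :=
            lt_of_lt_of_le (by nlinarith) hble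
          have hθ : (1 - 1/(k+1) : ℝ) * ‖g n (My.smul (ort n) y)‖ / ‖My.smul (ort n) y‖
              < ‖φn n‖ := (div_lt_iff₀ hrpos).mpr htb
          obtain ⟨x, hxlt, hxgt⟩ := (φn n).exists_lt_apply_of_lt_opNorm hθ
          have hθ0 : (0:ℝ) ≤ (1 - 1/(k+1) : ℝ) * ‖g n (My.smul (ort n) y)‖
              / ‖My.smul (ort n) y‖ := by positivity
          have hne : Mx.smul (ort n) x ≠ 0 := by
            intro h0
            have hz : φn n x = 0 := by rw [← hphin n x, h0, map_zero]
            rw [hz, norm_zero] at hxgt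
            exact absurd hxgt (not_lt.mpr hθ0)
          have hxpos : 0 < ‖Mx.smul (ort n) x‖ := norm_pos_iff.mpr hne
          have hxnorm' : ‖Mx.smul (ort n) x‖ < 1 := by
            calc ‖Mx.smul (ort n) x‖ ≤ ‖ort n‖ * ‖x‖ := Mx.norm_smul_le _ _
              _ ≤ 1 * ‖x‖ := mul_le_mul_of_nonneg_right (norm_ort_le n) (norm_nonneg x)
              _ = ‖x‖ := one_mul _
              _ < 1 := hxlt
          refine ⟨((‖My.smul (ort n) y‖ / ‖Mx.smul (ort n) x‖ : ℝ) : ℂ) • Mx.smul (ort n) x,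
            fun h => absurd hn h, fun _ => ⟨?_, ?_, ?_⟩⟩
          · rw [Mx.csmul_right, ← Mx.mul_smul, ort_mul_ort, if_pos rfl]
          · rw [norm_smul, Complex.norm_real, Real.norm_eq_abs,
              abs_of_nonneg (by positivity), div_mul_cancel₀ _ hxpos.ne']
          · rw [_root_.map_smul, norm_smul, Complex.norm_real, Real.norm_eq_abs,
              abs_of_nonneg (by positivity), hphin n x]
            have hdiv : ‖My.smul (ort n) y‖
                ≤ ‖My.smul (ort n) y‖ / ‖Mx.smul (ort n) x‖ := by
              rw [le_div_iff₀ hxpos]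
              nlinarith [hrpos.le, hxnorm'.le]
            calc (1 - 1/(k+1) : ℝ) * ‖g n (My.smul (ort n) y)‖
                = (1 - 1/(k+1) : ℝ) * ‖g n (My.smul (ort n) y)‖ / ‖My.smul (ort n) y‖
                    * ‖My.smul (ort n) y‖ := by field_simp
              _ ≤ ‖φn n x‖ * ‖My.smul (ort n) y‖ :=
                  mul_le_mul_of_nonneg_right hxgt.le hrpos.le
              _ ≤ ‖φn n x‖ * (‖My.smul (ort n) y‖ / ‖Mx.smul (ort n) x‖) :=
                  mul_le_mul_of_nonneg_left hdiv (norm_nonneg _)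
              _ = ‖My.smul (ort n) y‖ / ‖Mx.smul (ort n) x‖ * ‖φn n x‖ := mul_comm _ _
        · exact ⟨0, fun _ => rfl, fun h => absurd h hn⟩
      choose u hu0 hu using hex
      have hcoords : ∀ m : ℕ, Mx.smul (ort m) (∑ n ∈ s', u n)
          = if m ∈ s' then u m else 0 := by
        intro m
        rw [show Mx.smul (ort m) (∑ n ∈ s', u n) = ∑ n ∈ s', Mx.smul (ort m) (u n) from
          map_sum (Mx.lsmul (ort m)) _ _]
        by_cases hm : m ∈ s'
        · rw [if_pos hm, Finset.sum_eq_single_of_mem m hm]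
          · exact (hu m hm).1
          · intro n hn hnm
            have hmn : ¬ (m = n) := fun hmn' => hnm hmn'.symm
            rw [← (hu n hn).1, ← Mx.mul_smul, ort_mul_ort, if_neg hmn,
              C0Mod.smul_zero_left]
        · rw [if_neg hm]
          apply Finset.sum_eq_zero
          intro n hn
          have hmn : ¬ (m = n) := fun e => hm (by rwa [e])
          rw [← (hu n hn).1, ← Mx.mul_smul, ort_mul_ort, if_neg hmn,
            C0Mod.smul_zero_left]
      have hnormeq : ‖i (∑ n ∈ s', u n)‖ = ‖My.smul (∑ n ∈ s', ort n) y‖ := by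
        apply hY
        intro m
        rw [← himod, hcoords m, ← My.mul_smul, ort_mul_sum]
        by_cases hm : m ∈ s'
        · rw [if_pos hm, if_pos hm, hiiso, (hu m hm).2.1]
        · rw [if_neg hm, if_neg hm, _root_.map_zero, C0Mod.smul_zero_left]
      have hxFle : ‖(∑ n ∈ s', u n : X)‖ ≤ ‖y‖ := by
        rw [← hiiso, hnormeq]
        calc ‖My.smul (∑ n ∈ s', ort n) y‖ ≤ ‖(∑ n ∈ s', ort n : czero)‖ * ‖y‖ :=
              My.norm_smul_le _ _
          _ ≤ 1 * ‖y‖ := mul_le_mul_of_nonneg_right (norm_ort_sum_le s') (norm_nonneg y)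
          _ = ‖y‖ := one_mul _
      have hφxF : ‖φ (∑ n ∈ s', u n)‖ ≤ ‖φ‖ * ‖y‖ :=
        le_trans (φ.le_opNorm _) (mul_le_mul_of_nonneg_left hxFle (norm_nonneg φ))
      have hterm : ∀ n ∈ s', ((1 - 1/(k+1) : ℝ) * ‖g n (My.smul (ort n) y)‖) ^ p.toReal
          ≤ ‖(φ (∑ n ∈ s', u n)) n‖ ^ p.toReal := by
        intro n hn
        apply Real.rpow_le_rpow (by positivity) _ hpt.le
        have heq : (φ (∑ n ∈ s', u n)) n = φn n (u n) := by
          have h1 := hphin n (∑ n ∈ s', u n)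
          rw [hcoords n, if_pos hn] at h1
          exact h1.symm
        rw [heq]
        exact (hu n hn).2.2
      calc (1 - 1/(k+1) : ℝ) ^ p.toReal *
            ∑ n ∈ s', ‖g n (My.smul (ort n) y)‖ ^ p.toReal
          = ∑ n ∈ s', ((1 - 1/(k+1) : ℝ) * ‖g n (My.smul (ort n) y)‖) ^ p.toReal := by
            rw [Finset.mul_sum]
            apply Finset.sum_congr rfl
            intro n _
            rw [Real.mul_rpow ht0 (norm_nonneg _)]
        _ ≤ ∑ n ∈ s', ‖(φ (∑ n ∈ s', u n)) n‖ ^ p.toReal := Finset.sum_le_sum hterm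
        _ ≤ ∑' n, ‖(φ (∑ n ∈ s', u n)) n‖ ^ p.toReal :=
            Summable.sum_le_tsum s' (fun n _ => Real.rpow_nonneg (norm_nonneg _) _)
              ((lp.memℓp _).summable hpt)
        _ = ‖φ (∑ n ∈ s', u n)‖ ^ p.toReal := (lp.norm_rpow_eq_tsum hpt _).symm
        _ ≤ (‖φ‖ * ‖y‖) ^ p.toReal := Real.rpow_le_rpow (norm_nonneg _) hφxF hpt.le
    -- pass to the limit k → ∞
    have h1 : Filter.Tendsto (fun k : ℕ => (1 - 1/(k+1) : ℝ)) atTop (nhds 1) := by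
      have h0 := tendsto_one_div_add_atTop_nhds_zero_nat (𝕜 := ℝ)
      have := h0.const_sub (1:ℝ)
      simpa using this
    have h2 : Filter.Tendsto (fun k : ℕ => (1 - 1/(k+1) : ℝ) ^ p.toReal) atTop (nhds 1) := by
      have := h1.rpow_const (Or.inr hpt.le)
      simpa using this
    have h3 : Filter.Tendsto (fun k : ℕ => (1 - 1/(k+1) : ℝ) ^ p.toReal *
        ∑ n ∈ s', ‖g n (My.smul (ort n) y)‖ ^ p.toReal) atTop
        (nhds (∑ n ∈ s', ‖g n (My.smul (ort n) y)‖ ^ p.toReal)) := by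
      have := h2.mul_const (∑ n ∈ s', ‖g n (My.smul (ort n) y)‖ ^ p.toReal)
      simpa using this
    exact le_of_tendsto h3 (Filter.Eventually.of_forall main)
  -- construction of ψ
  have mem : ∀ y : Y, Memℓp (fun n => g n (My.smul (ort n) y)) p := by
    intro y
    apply memℓp_gen
    apply summable_of_sum_le (c := (‖φ‖ * ‖y‖) ^ p.toReal)
    · intro n
      exact Real.rpow_nonneg (norm_nonneg _) _
    · exact key y
  let ψ0 : Y →ₗ[ℂ] lp (fun _ : ℕ => ℂ) p :=
    { toFun := fun y => ⟨fun n => g n (My.smul (ort n) y), mem y⟩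
      map_add' := fun y z => by
        apply lp.ext
        rw [lp.coeFn_add]
        funext n
        show g n (My.smul (ort n) (y + z))
          = g n (My.smul (ort n) y) + g n (My.smul (ort n) z)
        rw [My.smul_add, map_add]
      map_smul' := fun c y => by
        apply lp.ext
        rw [lp.coeFn_smul]
        funext n
        show g n (My.smul (ort n) (c • y)) = c • g n (My.smul (ort n) y)
        rw [My.csmul_right, _root_.map_smul] }
  have hψb : ∀ y : Y, ‖ψ0 y‖ ≤ ‖φ‖ * ‖y‖ := by
    intro y
    apply lp.norm_le_of_tsum_le hpt (mul_nonneg (norm_nonneg _) (norm_nonneg _))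
    have hsum : Summable (fun n => ‖g n (My.smul (ort n) y)‖ ^ p.toReal) := by
      apply summable_of_sum_le (c := (‖φ‖ * ‖y‖) ^ p.toReal)
      · intro n
        exact Real.rpow_nonneg (norm_nonneg _) _
      · exact key y
    exact Summable.tsum_le_of_sum_le hsum (key y)
  let ψ : Y →L[ℂ] lp (fun _ : ℕ => ℂ) p := LinearMap.mkContinuous ψ0 ‖φ‖ hψb
  have hψi : ∀ x : X, ψ (i x) = φ x := by
    intro x
    apply lp.ext
    funext n
    show g n (My.smul (ort n) (i x)) = (φ x) n
    rw [← himod, hgi]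
    exact hphin n x
  refine ⟨ψ, ?_, hψi, ?_⟩
  · intro a y
    apply lp.ext
    funext n
    show g n (My.smul (ort n) (My.smul a y)) = a n * g n (My.smul (ort n) y)
    rw [← My.mul_smul, ort_mul_czero, My.csmul_left, _root_.map_smul, smul_eq_mul]
  · apply le_antisymm
    · exact LinearMap.mkContinuous_norm_le _ (norm_nonneg φ) _
    · apply ContinuousLinearMap.opNorm_le_bound _ (norm_nonneg ψ)
      intro x
      rw [← hiiso x]
      calc ‖φ x‖ = ‖ψ (i x)‖ := by rw [hψi x]
        _ ≤ ‖ψ‖ * ‖i x‖ := ψ.le_opNorm _
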